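/- Let R be a (not necessarily commutative) ring and let d, e, d', e', a, b ∈ R and w a central element of R satisfy: d·e + e·d = w, d'·e' + e'·d' = w, e·e = 0, e'·e' = 0, and d'·a − a·d + e'·b − b·e = 0. Then, setting θ := e'·a − a·e, one has d'·θ + θ·d = 0. -/
import Mathlib


/-- In the inductive construction extending a chain map to curved deformations,
`θ = e'·a − a·e` anticommutes with the differentials: `d'·θ + θ·d = 0`. -/
theorem theta_is_chain_map
    {R : Type*} [Ring R] (d e d' e' a b w : R)
    (hw : ∀ x : R, w * x = x * w)
    (hde : d * e + e * d = w)
    (hde' : d' * e' + e' * d' = w)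
    (he2 : e * e = 0) (he2' : e' * e' = 0)
    (hind : d' * a - a * d + e' * b - b * e = 0) :
    d' * (e' * a - a * e) + (e' * a - a * e) * d = 0 := by
  have h2 : d' * e' = w - e' * d' := eq_sub_of_add_eq hde'
  have h1 : d' * a = a * d - e' * b + b * e := by
    have h : d' * a - (a * d - e' * b + b * e) = 0 := by
      calc d' * a - (a * d - e' * b + b * e)
          = d' * a - a * d + e' * b - b * e := by noncomm_ring
        _ = 0 := hind
    exact sub_eq_zero.mp h
  calc d' * (e' * a - a * e) + (e' * a - a * e) * d
      = (d' * e') * a - (d' * a) * e + (e' * a) * d - a * (e * d) := by noncomm_ring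
    _ = (w - e' * d') * a - (a * d - e' * b + b * e) * e + (e' * a) * d - a * (e * d) := by
        rw [h2, h1]
    _ = w * a - e' * (d' * a) - (a * (d * e) - e' * (b * e) + b * (e * e))
          + e' * (a * d) - a * (e * d) := by noncomm_ring
    _ = w * a - e' * (a * d - e' * b + b * e) - (a * (d * e) - e' * (b * e) + b * 0)
          + e' * (a * d) - a * (e * d) := by rw [h1, he2]
    _ = w * a + (e' * e') * b - a * (d * e + e * d) := by noncomm_ring
    _ = w * a + 0 * b - a * w := by rw [he2', hde]
    _ = a * w + 0 - a * w := by rw [hw a, zero_mul]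
    _ = 0 := by rw [add_zero, sub_self]
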